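/- If X and Y are words of the same length n and X ≠ Y, then the concatenation Z = XY is not a square overlap of itself in the sense that the prefix of Z of length n differs from the suffix of Z of length n; moreover, if {X, Y} is mutually uncorrelated, then Z = XY is self-uncorrelated. -/

import Mathlib

/-- A word `X` is self-uncorrelated if no proper nonempty prefix of `X`
is also a suffix of `X`. -/
def selfUncorr {α : Type*} (X : List α) : Prop :=
  ∀ k : ℕ, 0 < k → k < X.length → X.take k ≠ X.drop (X.length - k)

/-- A set of words is mutually uncorrelated if each word is self-uncorrelated and
for any two distinct words, no nonempty prefix of one equals a suffix of the other. -/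
def mutUncorr {α : Type*} (S : Set (List α)) : Prop :=
  (∀ X ∈ S, selfUncorr X) ∧
  ∀ X ∈ S, ∀ Y ∈ S, X ≠ Y →
    ∀ k : ℕ, 0 < k → k ≤ X.length → k ≤ Y.length →
      X.take k ≠ Y.drop (Y.length - k)

/-- If `X ≠ Y` are words of length `n`, then the prefix of length `n` of `Z = XY`
differs from its suffix of length `n`; moreover, if `{X,Y}` is mutually
uncorrelated, then `Z = XY` is self-uncorrelated. -/
theorem stmt16 {α : Type*} (n : ℕ) (X Y : List α)
    (hX : X.length = n) (hY : Y.length = n) (hne : X ≠ Y) :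
    (X ++ Y).take n ≠ (X ++ Y).drop n ∧
    (mutUncorr ({X, Y} : Set (List α)) → selfUncorr (X ++ Y)) := by
  have part1 : (X ++ Y).take n ≠ (X ++ Y).drop n := by
    rw [List.take_left' hX, List.drop_left' hX]
    exact hne
  refine ⟨part1, ?_⟩
  rintro ⟨hself, hcross⟩ k hk hklt heq
  have hZ : (X ++ Y).length = n + n := by simp [hX, hY]
  rw [hZ] at hklt
  rcases lt_trichotomy k n with hlt | rfl | hgt
  · -- k < n : contradicts cross-uncorrelatedness X vs Y
    have h1 : (X ++ Y).take k = X.take k :=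
      List.take_append_of_le_length (by omega)
    have h2 : (X ++ Y).drop ((X ++ Y).length - k) = Y.drop (Y.length - k) := by
      have : (X ++ Y).length - k = X.length + (Y.length - k) := by
        simp [hX, hY]; omega
      rw [this, List.drop_length_add_append]
    rw [h1, h2] at heq
    exact hcross X (by simp) Y (by simp) hne k hk (by omega) (by omega) heq
  · -- k = n
    rw [List.take_left' hX] at heq
    rw [show (X ++ Y).length - k = k by omega, List.drop_left' hX] at heq
    exact hne heq
  · -- n < k < 2n : contradicts self-uncorrelatedness of X
    set j := k - n with hj
    have hj0 : 0 < j := by omega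
    have hjn : j < n := by omega
    have h1 : (X ++ Y).take k = X ++ Y.take j := by
      rw [show k = X.length + j by omega, List.take_length_add_append]
    have h2 : (X ++ Y).drop ((X ++ Y).length - k) = X.drop (n - j) ++ Y := by
      rw [show (X ++ Y).length - k = n - j by omega]
      rw [List.drop_append_of_le_length (by omega)]
    rw [h1, h2] at heq
    have htake := congrArg (List.take j) heq
    have e1 : (X ++ Y.take j).take j = X.take j :=
      List.take_append_of_le_length (by omega)
    have e2 : (X.drop (n - j) ++ Y).take j = X.drop (n - j) := by
      apply List.take_left'
      rw [List.length_drop, hX]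
      omega
    rw [e1, e2] at htake
    exact hself X (by simp) j hj0 (by omega) (by rw [hX]; exact htake)
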